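/- arXiv:cs/0604024 — 3 statements merged into one kernel-verified Lean document; each statement's English description precedes it below -/
import Mathlib

section
/- Suppose 0 → K → A →^β B → 0 is a short exact sequence in 𝒜, and suppose there exist an object H and a morphism γ : A → H such that the sequence 0 → A →^{(β,γ)} B ⊕ H → C → 0 is exact, where the B-component of the first map is β. Then cc(F, K) ≤ cc(F, A) + cc(F, C). (This is the core inequality in the proof of the paper's Theorem 1, with K, A, B, C playing the roles of G_{U∩Z̄}, G_U, G_{U∩Z}, G_Z, and H a virtual zero extension G_{U,Z}.) -/
open CategoryTheory Opposite Limits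

/-- The cohomological complexity `cc(F, X) = ∑_{i ≥ 0} dim_𝕜 Ext^i(F, X)` (a finite sum
under the standing assumptions that the Ext groups are finite-dimensional and vanish for
all sufficiently large `i`). -/
noncomputable def cc (𝕜 : Type*) [Field 𝕜] {𝒜 : Type*} [Category 𝒜] [Abelian 𝒜]
    [Linear 𝕜 𝒜] [EnoughProjectives 𝒜] (F X : 𝒜) : ℕ :=
  ∑ᶠ i : ℕ, Module.finrank 𝕜 (((Ext 𝕜 𝒜 i).obj (op F)).obj X)

namespace CCAux

section Pseudo

open CategoryTheory.Abelian
open scoped Pseudoelement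

theorem pseudo_id_apply {𝒜 : Type*} [Category 𝒜] [Abelian 𝒜] {P : 𝒜}
    (a : Pseudoelement P) : Pseudoelement.pseudoApply (𝟙 P) a = a :=
  Quotient.inductionOn a fun x => by
    rw [Pseudoelement.pseudoApply_mk']
    exact Quotient.sound ⟨x.1, 𝟙 _, 𝟙 _, inferInstance, inferInstance, by simp⟩

variable {𝕜 : Type*} [Field 𝕜] {𝒜 : Type*} [Category 𝒜] [Abelian 𝒜] [Linear 𝕜 𝒜]

theorem third_w {K A B C H : 𝒜}
    (ι : K ⟶ A) (β : A ⟶ B) (w₁ : ι ≫ β = 0)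
    (γ : A ⟶ H) (δ : B ⊞ H ⟶ C) (w₂ : biprod.lift β γ ≫ δ = 0) :
    (ι ≫ γ) ≫ (biprod.inr ≫ δ) = 0 := by
  have hkey : ι ≫ biprod.lift β γ = (ι ≫ γ) ≫ biprod.inr := by
    apply biprod.hom_ext <;> simp [w₁]
  rw [← Category.assoc, ← hkey, Category.assoc, w₂, comp_zero]

theorem third_ses {K A B C H : 𝒜}
    (ι : K ⟶ A) (β : A ⟶ B) (w₁ : ι ≫ β = 0)
    (hse₁ : (ShortComplex.mk ι β w₁).ShortExact)
    (γ : A ⟶ H) (δ : B ⊞ H ⟶ C) (w₂ : biprod.lift β γ ≫ δ = 0)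
    (hse₂ : (ShortComplex.mk (biprod.lift β γ) δ w₂).ShortExact) :
    (ShortComplex.mk (ι ≫ γ) (biprod.inr ≫ δ) (third_w ι β w₁ γ δ w₂)).ShortExact := by
  have h1 := hse₁.mono_f
  have h2 := hse₁.epi_g
  have h3 := hse₂.mono_f
  have h4 := hse₂.epi_g
  simp only [ShortComplex.mk] at h1 h2 h3 h4
  haveI h1' : Mono ι := h1
  haveI h2' : Epi β := h2
  haveI h3' : Mono (biprod.lift β γ) := h3
  haveI h4' : Epi δ := h4
  have hkey : ι ≫ biprod.lift β γ = (ι ≫ γ) ≫ biprod.inr := by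
    apply biprod.hom_ext <;> simp [w₁]
  have hsum : β ≫ (biprod.inl ≫ δ) + γ ≫ (biprod.inr ≫ δ) = 0 := by
    have h := w₂
    rw [biprod.lift_eq] at h
    simpa [Category.assoc] using h
  haveI hmono : Mono (ι ≫ γ) := by
    haveI : Mono ((ι ≫ γ) ≫ (biprod.inr : H ⟶ B ⊞ H)) := by
      rw [← hkey]; exact mono_comp _ _
    exact mono_of_mono (ι ≫ γ) (biprod.inr : H ⟶ B ⊞ H)
  haveI hepi : Epi (biprod.inr ≫ δ) := by
    apply Preadditive.epi_of_cancel_zero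
    intro Q π hπ
    rw [Category.assoc] at hπ
    have hb : β ≫ biprod.inl ≫ δ ≫ π = 0 := by
      have h := congrArg (· ≫ π) hsum
      simp only [Preadditive.add_comp, Category.assoc, zero_comp] at h
      rw [hπ, comp_zero, add_zero] at h
      exact h
    have hinl : biprod.inl ≫ δ ≫ π = 0 := zero_of_epi_comp β hb
    have : δ ≫ π = 0 := by
      apply biprod.hom_ext' <;> simp [hπ, hinl]
    exact zero_of_epi_comp δ this
  refine ShortComplex.ShortExact.mk ?_
  apply Pseudoelement.exact_of_pseudo_exact
  intro h hh
  have hh' : (Pseudoelement.pseudoApply δ) ((Pseudoelement.pseudoApply biprod.inr) h) = 0 := by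
    rw [← Pseudoelement.comp_apply]
    exact hh
  obtain ⟨a, ha⟩ := Pseudoelement.pseudo_exact_of_exact hse₂.exact _ hh'
  have hβa : Pseudoelement.pseudoApply β a = 0 := by
    have := congrArg (Pseudoelement.pseudoApply (biprod.fst : B ⊞ H ⟶ B)) ha
    rw [← Pseudoelement.comp_apply, ← Pseudoelement.comp_apply] at this
    simpa [Pseudoelement.zero_apply] using this
  obtain ⟨k, hk⟩ := Pseudoelement.pseudo_exact_of_exact hse₁.exact _ hβa
  refine ⟨k, ?_⟩
  have hγa : Pseudoelement.pseudoApply γ a = h := by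
    have := congrArg (Pseudoelement.pseudoApply (biprod.snd : B ⊞ H ⟶ H)) ha
    rw [← Pseudoelement.comp_apply, ← Pseudoelement.comp_apply] at this
    simp only [biprod.lift_snd, biprod.inr_snd] at this
    rwa [pseudo_id_apply] at this
  rw [Pseudoelement.comp_apply]
  rw [show Pseudoelement.pseudoApply ι k = a from hk]
  exact hγa

end Pseudo

variable {𝕜 : Type*} [Field 𝕜] {𝒜 : Type*} [Category 𝒜] [Abelian 𝒜] [Linear 𝕜 𝒜]

/-- Post-composition morphism on the Hom complex. -/
noncomputable def mapE {F : 𝒜} (P : ProjectiveResolution F) {Y Z : 𝒜} (f : Y ⟶ Z) :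
    P.complex.linearYonedaObj 𝕜 Y ⟶ P.complex.linearYonedaObj 𝕜 Z where
  f n := ModuleCat.ofHom (Linear.rightComp 𝕜 (P.complex.X n) f)
  comm' i j hij := by
    ext g
    exact (Category.assoc _ _ _).symm

lemma mapE_comp {F : 𝒜} (P : ProjectiveResolution F) {Y Z W : 𝒜} (f : Y ⟶ Z) (g : Z ⟶ W) :
    mapE (𝕜 := 𝕜) P (f ≫ g) = mapE P f ≫ mapE P g := by
  ext n x
  exact (Category.assoc _ _ _).symm

lemma mapE_apply {F : 𝒜} (P : ProjectiveResolution F) {Y Z : 𝒜} (f : Y ⟶ Z) (n : ℕ)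
    (x : P.complex.X n ⟶ Y) : ((mapE (𝕜 := 𝕜) P f).f n) x = x ≫ f := rfl

/-- The complex-level short complex of a short exact sequence is short exact. -/
lemma mapE_shortExact {F : 𝒜} [EnoughProjectives 𝒜] (P : ProjectiveResolution F)
    {S : ShortComplex 𝒜} (hS : S.ShortExact) :
    (ShortComplex.mk (mapE (𝕜 := 𝕜) P S.f) (mapE P S.g)
      (by rw [← mapE_comp, S.zero]; ext n x; exact comp_zero)).ShortExact := by
  have hm := hS.mono_f
  have he := hS.epi_g
  apply HomologicalComplex.shortExact_of_degreewise_shortExact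
  intro n
  refine { exact := ?_, mono_f := ?_, epi_g := ?_ }
  · rw [ShortComplex.moduleCat_exact_iff]
    intro x hx
    have hx' : (x : P.complex.X n ⟶ S.X₂) ≫ S.g = 0 := hx
    exact ⟨hS.exact.lift x hx', hS.exact.lift_f x hx'⟩
  · rw [ModuleCat.mono_iff_injective]
    intro x y hxy
    have : (x : P.complex.X n ⟶ S.X₁) ≫ S.f = y ≫ S.f := hxy
    exact (cancel_mono S.f).1 this
  · rw [ModuleCat.epi_iff_surjective]
    intro g
    haveI := P.projective n
    exact ⟨Projective.factorThru g S.g, Projective.factorThru_comp g S.g⟩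

/-- Linear algebra: if `ker (v ∘ u) ⊆ range f` then `dim M ≤ dim W + dim A`. -/
lemma finrank_le_of_factor {M W A V : Type*} [AddCommGroup M] [Module 𝕜 M]
    [AddCommGroup W] [Module 𝕜 W] [AddCommGroup A] [Module 𝕜 A]
    [AddCommGroup V] [Module 𝕜 V]
    [FiniteDimensional 𝕜 M] [FiniteDimensional 𝕜 W] [FiniteDimensional 𝕜 A]
    (f : W →ₗ[𝕜] M) (u : M →ₗ[𝕜] A) (v : A →ₗ[𝕜] V)
    (h : LinearMap.ker (v.comp u) ≤ LinearMap.range f) :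
    Module.finrank 𝕜 M ≤ Module.finrank 𝕜 W + Module.finrank 𝕜 A := by
  have h1 : LinearMap.ker u ≤ LinearMap.range f :=
    le_trans (LinearMap.ker_le_ker_comp u v) h
  have e1 : Module.finrank 𝕜 (LinearMap.range u) + Module.finrank 𝕜 (LinearMap.ker u)
      = Module.finrank 𝕜 M := u.finrank_range_add_finrank_ker
  have h2 : Module.finrank 𝕜 (LinearMap.ker u) ≤ Module.finrank 𝕜 (LinearMap.range f) :=
    Submodule.finrank_mono h1
  have h3 : Module.finrank 𝕜 (LinearMap.range f) ≤ Module.finrank 𝕜 W :=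
    LinearMap.finrank_range_le f
  have h4 : Module.finrank 𝕜 (LinearMap.range u) ≤ Module.finrank 𝕜 A :=
    Submodule.finrank_le _
  omega

end CCAux

open CCAux

/-- If `0 → K → A →^β B → 0` is short exact and there are an object `H`
and a morphism `γ : A ⟶ H` such that `0 → A →^{(β,γ)} B ⊞ H → C → 0` is short exact
(the `B`-component of the first map being `β`), then `cc(F, K) ≤ cc(F, A) + cc(F, C)`. -/
theorem cc_of_virtual_zero_extension (𝕜 : Type*) [Field 𝕜] {𝒜 : Type*} [Category 𝒜]
    [Abelian 𝒜] [Linear 𝕜 𝒜] [EnoughProjectives 𝒜] (F K A B C H : 𝒜)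
    (ι : K ⟶ A) (β : A ⟶ B) (w₁ : ι ≫ β = 0)
    (hse₁ : (ShortComplex.mk ι β w₁).ShortExact)
    (γ : A ⟶ H) (δ : B ⊞ H ⟶ C) (w₂ : biprod.lift β γ ≫ δ = 0)
    (hse₂ : (ShortComplex.mk (biprod.lift β γ) δ w₂).ShortExact)
    (hfd : ∀ (i : ℕ) (X : 𝒜), FiniteDimensional 𝕜 (((Ext 𝕜 𝒜 i).obj (op F)).obj X))
    (hvan : ∀ X : 𝒜, ∃ N : ℕ, ∀ i ≥ N, Subsingleton (((Ext 𝕜 𝒜 i).obj (op F)).obj X)) :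
    cc 𝕜 F K ≤ cc 𝕜 F A + cc 𝕜 F C := by
  classical
  -- the third short exact sequence 0 → K → H → C → 0
  have hse₃ := third_ses ι β w₁ hse₁ γ δ w₂ hse₂
  -- a projective resolution of F
  let P : ProjectiveResolution F := ProjectiveResolution.of F
  -- the short exact sequence of Hom complexes
  let Sc : ShortComplex (CochainComplex (ModuleCat 𝕜) ℕ) :=
    ShortComplex.mk (mapE (𝕜 := 𝕜) P (ι ≫ γ)) (mapE P (biprod.inr ≫ δ))
      (by rw [← mapE_comp, third_w ι β w₁ γ δ w₂]; ext n x; exact comp_zero)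
  have hSc : Sc.ShortExact := mapE_shortExact P hse₃
  -- dimension functions
  set k : ℕ → ℕ := fun i => Module.finrank 𝕜 (((Ext 𝕜 𝒜 i).obj (op F)).obj K) with hk
  set a : ℕ → ℕ := fun i => Module.finrank 𝕜 (((Ext 𝕜 𝒜 i).obj (op F)).obj A) with ha
  set c : ℕ → ℕ := fun i => Module.finrank 𝕜 (((Ext 𝕜 𝒜 i).obj (op F)).obj C) with hc
  -- finite dimensionality of homology
  haveI hfdh : ∀ (i : ℕ) (X : 𝒜),
      FiniteDimensional 𝕜 ((P.complex.linearYonedaObj 𝕜 X).homology i) := by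
    intro i X
    haveI := hfd i X
    exact (P.isoExt i X).toLinearEquiv.finiteDimensional
  have hkeq : ∀ (i : ℕ) (X : 𝒜), Module.finrank 𝕜 (((Ext 𝕜 𝒜 i).obj (op F)).obj X)
      = Module.finrank 𝕜 ((P.complex.linearYonedaObj 𝕜 X).homology i) := by
    intro i X
    exact (P.isoExt i X).toLinearEquiv.finrank_eq
  -- the `0`-th bound : k 0 ≤ a 0
  have hb0 : k 0 ≤ a 0 := by
    haveI : Mono (Sc.f.f 0) :=
      ((HomologicalComplex.shortExact_iff_degreewise_shortExact Sc).1 hSc 0).mono_f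
    haveI : Mono (HomologicalComplex.homologyMap Sc.f 0) :=
      HomologicalComplex.mono_homologyMap_of_mono_of_not_rel Sc.f 0 (by simp)
    have hcomp : HomologicalComplex.homologyMap (mapE (𝕜 := 𝕜) P ι) 0 ≫
        HomologicalComplex.homologyMap (mapE (𝕜 := 𝕜) P γ) 0
        = HomologicalComplex.homologyMap Sc.f 0 := by
      rw [← HomologicalComplex.homologyMap_comp]
      congr 1
      exact (mapE_comp P ι γ).symm
    have hinj : Function.Injective (HomologicalComplex.homologyMap Sc.f 0) :=
      (ModuleCat.mono_iff_injective _).1 inferInstance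
    rw [← hcomp] at hinj
    have hinj' : Function.Injective (HomologicalComplex.homologyMap (mapE (𝕜 := 𝕜) P ι) 0) := by
      intro x y hxy
      apply hinj
      show (HomologicalComplex.homologyMap (mapE (𝕜 := 𝕜) P γ) 0)
        ((HomologicalComplex.homologyMap (mapE (𝕜 := 𝕜) P ι) 0) x) = _
      rw [hxy]
      rfl
    rw [hk, ha]
    simp only [hkeq]
    exact LinearMap.finrank_le_finrank_of_injective hinj'
  -- the bound in positive degrees : k (i+1) ≤ a (i+1) + c i
  have hbs : ∀ i : ℕ, k (i + 1) ≤ a (i + 1) + c i := by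
    intro i
    have hrel : (ComplexShape.up ℕ).Rel i (i + 1) := by simp
    have hex := hSc.homology_exact₁ i (i + 1) hrel
    rw [ShortComplex.moduleCat_exact_iff_range_eq_ker] at hex
    have hex' : LinearMap.range (hSc.δ i (i + 1) hrel).hom
        = LinearMap.ker (HomologicalComplex.homologyMap Sc.f (i + 1)).hom := hex
    have hcomp : HomologicalComplex.homologyMap Sc.f (i + 1)
        = HomologicalComplex.homologyMap (mapE (𝕜 := 𝕜) P ι) (i + 1) ≫
          HomologicalComplex.homologyMap (mapE (𝕜 := 𝕜) P γ) (i + 1) := by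
      rw [← HomologicalComplex.homologyMap_comp]
      congr 1
      exact mapE_comp P ι γ
    rw [hk, ha, hc]
    simp only [hkeq]
    have hle := finrank_le_of_factor (hSc.δ i (i + 1) hrel).hom
      (HomologicalComplex.homologyMap (mapE (𝕜 := 𝕜) P ι) (i + 1)).hom
      (HomologicalComplex.homologyMap (mapE (𝕜 := 𝕜) P γ) (i + 1)).hom (by
        intro x hx
        have h0 : (HomologicalComplex.homologyMap Sc.f (i + 1)).hom x = 0 := by
          rw [hcomp, ModuleCat.hom_comp]
          exact LinearMap.mem_ker.1 hx
        have : x ∈ LinearMap.ker (HomologicalComplex.homologyMap Sc.f (i + 1)).hom :=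
          LinearMap.mem_ker.2 h0
        rw [← hex'] at this
        exact this)
    exact hle.trans_eq (Nat.add_comm _ _)
  -- summation
  obtain ⟨N₁, hN₁⟩ := hvan K
  obtain ⟨N₂, hN₂⟩ := hvan A
  obtain ⟨N₃, hN₃⟩ := hvan C
  set N := max N₁ (max N₂ N₃) with hN
  have hkz : ∀ i ≥ N, k i = 0 := fun i hi => by
    haveI := hN₁ i (le_trans (le_max_left _ _) hi)
    exact Module.finrank_zero_of_subsingleton
  have haz : ∀ i ≥ N, a i = 0 := fun i hi => by
    haveI := hN₂ i (le_trans (le_trans (le_max_left _ _) (le_max_right _ _)) hi)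
    exact Module.finrank_zero_of_subsingleton
  have hcz : ∀ i ≥ N, c i = 0 := fun i hi => by
    haveI := hN₃ i (le_trans (le_trans (le_max_right _ _) (le_max_right _ _)) hi)
    exact Module.finrank_zero_of_subsingleton
  have hsup : ∀ (f : ℕ → ℕ), (∀ i ≥ N, f i = 0) →
      ∑ᶠ i : ℕ, f i = ∑ i ∈ Finset.range (N + 1), f i := by
    intro f hf
    apply finsum_eq_finset_sum_of_support_subset
    intro i hi
    simp only [Function.mem_support] at hi
    simp only [Finset.coe_range, Set.mem_Iio]
    by_contra hcon
    exact hi (hf i (by omega))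
  have hccK : cc 𝕜 F K = ∑ i ∈ Finset.range (N + 1), k i := hsup k hkz
  have hccA : cc 𝕜 F A = ∑ i ∈ Finset.range (N + 1), a i := hsup a haz
  have hccC : cc 𝕜 F C = ∑ i ∈ Finset.range (N + 1), c i := hsup c hcz
  rw [hccK, hccA, hccC]
  rw [Finset.sum_range_succ' k N, Finset.sum_range_succ' a N]
  have : ∑ i ∈ Finset.range N, k (i + 1) ≤
      ∑ i ∈ Finset.range N, (a (i + 1) + c i) :=
    Finset.sum_le_sum fun i _ => hbs i
  rw [Finset.sum_add_distrib] at this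
  have hcle : ∑ i ∈ Finset.range N, c i ≤ ∑ i ∈ Finset.range (N + 1), c i := by
    rw [Finset.sum_range_succ]
    omega
  omega
end

section
/- Suppose 0 → K → A →^β B → 0 is a short exact sequence in 𝒜; suppose there exist an object H and a morphism γ : A → H such that 0 → A →^{(β,γ)} B ⊕ H → C → 0 is exact, where the B-component of the first map is β; and suppose 0 → C' → G → C → 0 is a short exact sequence. Then cc(F, K) ≤ cc(F, G) + cc(F, A) + cc(F, C'). (This is the abstract form of the paper's Theorem 1: there K = G_{U∩Z̄}, A = G_U, B = G_{U∩Z}, C = G_Z, C' = G_{Z̄}, and H is a virtual G_{U,Z}.) -/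
open CategoryTheory Opposite Limits

section Aux

variable {𝕜 : Type*} [Field 𝕜] {𝒜 : Type*} [Category 𝒜] [Abelian 𝒜] [Linear 𝕜 𝒜]

/-- Covariant functoriality of `linearYonedaObj`. -/
noncomputable def Lmap (P : ChainComplex 𝒜 ℕ) {X Y : 𝒜} (f : X ⟶ Y) :
    P.linearYonedaObj 𝕜 X ⟶ P.linearYonedaObj 𝕜 Y where
  f n := ModuleCat.ofHom (Linear.rightComp 𝕜 (P.X n) f)
  comm' i j _ := by
    ext (g : P.X i ⟶ X)
    show P.d j i ≫ (g ≫ f) = (P.d j i ≫ g) ≫ f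
    simp

lemma Lmap_comp (P : ChainComplex 𝒜 ℕ) {X Y Z : 𝒜} (f : X ⟶ Y) (g : Y ⟶ Z) :
    Lmap (𝕜 := 𝕜) P (f ≫ g) = Lmap P f ≫ Lmap P g := by
  ext n (h : P.X n ⟶ X)
  show h ≫ (f ≫ g) = (h ≫ f) ≫ g
  simp

lemma Lmap_id (P : ChainComplex 𝒜 ℕ) (X : 𝒜) :
    Lmap (𝕜 := 𝕜) P (𝟙 X) = 𝟙 _ := by
  ext n (h : P.X n ⟶ X)
  show h ≫ 𝟙 X = h
  simp

lemma Lmap_zero' (P : ChainComplex 𝒜 ℕ) {X Y Z : 𝒜} (f : X ⟶ Y) (g : Y ⟶ Z)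
    (w : f ≫ g = 0) : Lmap (𝕜 := 𝕜) P f ≫ Lmap P g = 0 := by
  rw [← Lmap_comp, w]
  ext n (h : P.X n ⟶ X)
  show h ≫ (0 : X ⟶ Z) = 0
  simp

/-- The mapped short complex of Hom-cochain-complexes. -/
noncomputable def LS (P : ChainComplex 𝒜 ℕ) (S : ShortComplex 𝒜) :
    ShortComplex (HomologicalComplex (ModuleCat 𝕜) (ComplexShape.up ℕ)) :=
  ShortComplex.mk (Lmap P S.f) (Lmap P S.g) (Lmap_zero' P S.f S.g S.zero)

lemma LS_shortExact (P : ChainComplex 𝒜 ℕ) (hP : ∀ n, Projective (P.X n))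
    (S : ShortComplex 𝒜) (hS : S.ShortExact) : (LS (𝕜 := 𝕜) P S).ShortExact := by
  have := hS.mono_f
  have := hS.epi_g
  apply HomologicalComplex.shortExact_of_degreewise_shortExact
  intro n
  haveI : Mono ((LS (𝕜 := 𝕜) P S).map (HomologicalComplex.eval _ _ n)).f := by
    rw [ModuleCat.mono_iff_injective]
    intro (h₁ : P.X n ⟶ S.X₁) (h₂ : P.X n ⟶ S.X₁) (e : h₁ ≫ S.f = h₂ ≫ S.f)
    exact (cancel_mono S.f).mp e
  haveI : Epi ((LS (𝕜 := 𝕜) P S).map (HomologicalComplex.eval _ _ n)).g := by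
    rw [ModuleCat.epi_iff_surjective]
    intro (h : P.X n ⟶ S.X₃)
    exact ⟨@Projective.factorThru _ _ _ _ _ (hP n) h S.g _, Projective.factorThru_comp _ _⟩
  refine ShortComplex.ShortExact.mk ?_
  rw [ShortComplex.moduleCat_exact_iff]
  intro (h : P.X n ⟶ S.X₂) (hh : h ≫ S.g = 0)
  obtain ⟨l, hl⟩ := KernelFork.IsLimit.lift' hS.fIsKernel h hh
  exact ⟨l, hl⟩

end Aux

section LinAlg

open Module LinearMap

variable {𝕜 : Type*} [Field 𝕜]
variable {M₁ M₂ M₃ M₄ : Type*} [AddCommGroup M₁] [Module 𝕜 M₁] [AddCommGroup M₂] [Module 𝕜 M₂]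
  [AddCommGroup M₃] [Module 𝕜 M₃] [AddCommGroup M₄] [Module 𝕜 M₄]

lemma les_count [FiniteDimensional 𝕜 M₂] [FiniteDimensional 𝕜 M₃] [FiniteDimensional 𝕜 M₄]
    (u : M₁ →ₗ[𝕜] M₂) (v : M₂ →ₗ[𝕜] M₃) (w : M₃ →ₗ[𝕜] M₄)
    (h1 : range u = ker v) (h2 : range v = ker w) :
    finrank 𝕜 M₃ + finrank 𝕜 (range u) ≤ finrank 𝕜 M₄ + finrank 𝕜 M₂ := by
  have e1 := w.finrank_range_add_finrank_ker
  have e2 := v.finrank_range_add_finrank_ker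
  have e3 : finrank 𝕜 (ker w) = finrank 𝕜 (range v) := by rw [h2]
  have e4 : finrank 𝕜 (ker v) = finrank 𝕜 (range u) := by rw [h1]
  have e5 : finrank 𝕜 (range w) ≤ finrank 𝕜 M₄ := Submodule.finrank_le _
  omega

variable {N B A C G D : Type*} [AddCommGroup N] [Module 𝕜 N] [AddCommGroup B] [Module 𝕜 B]
  [AddCommGroup A] [Module 𝕜 A] [AddCommGroup C] [Module 𝕜 C] [AddCommGroup G] [Module 𝕜 G]
  [AddCommGroup D] [Module 𝕜 D]

lemma coker_count [FiniteDimensional 𝕜 N] [FiniteDimensional 𝕜 B] [FiniteDimensional 𝕜 C]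
    [FiniteDimensional 𝕜 G] [FiniteDimensional 𝕜 D]
    (p : N →ₗ[𝕜] B) (hp : Function.Surjective p) (f : A →ₗ[𝕜] N) (g : N →ₗ[𝕜] C)
    (hgf : range f = ker g) (u : G →ₗ[𝕜] C) (d : C →ₗ[𝕜] D) (hud : range u = ker d) :
    finrank 𝕜 B ≤ finrank 𝕜 (range (p ∘ₗ f)) + (finrank 𝕜 G + finrank 𝕜 D) := by
  have e1 : finrank 𝕜 (range p) + finrank 𝕜 (ker p) = finrank 𝕜 N :=
    p.finrank_range_add_finrank_ker
  have e1' : finrank 𝕜 (range p) = finrank 𝕜 B := by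
    rw [LinearMap.range_eq_top.mpr hp, finrank_top]
  set q : range f →ₗ[𝕜] B := p ∘ₗ (range f).subtype with hq
  have e2 : finrank 𝕜 (range q) + finrank 𝕜 (ker q) = finrank 𝕜 (range f) :=
    q.finrank_range_add_finrank_ker
  have e2' : finrank 𝕜 (range q) = finrank 𝕜 (range (p ∘ₗ f)) := by
    rw [hq, LinearMap.range_comp, LinearMap.range_comp, Submodule.range_subtype]
  have e2'' : finrank 𝕜 (ker q) ≤ finrank 𝕜 (ker p) := by
    have hj : ∀ x : ker q, ((range f).subtype ∘ₗ (ker q).subtype) x ∈ ker p := fun x => x.2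
    refine LinearMap.finrank_le_finrank_of_injective
      (f := LinearMap.codRestrict (ker p) ((range f).subtype ∘ₗ (ker q).subtype) hj) ?_
    have hinj : Function.Injective ⇑((range f).subtype ∘ₗ (ker q).subtype) := by
      rw [LinearMap.coe_comp]
      exact Subtype.val_injective.comp Subtype.val_injective
    intro x y hxy
    apply hinj
    simpa [LinearMap.codRestrict_apply] using congrArg Subtype.val hxy
  have e3 : finrank 𝕜 (range g) + finrank 𝕜 (ker g) = finrank 𝕜 N :=
    g.finrank_range_add_finrank_ker
  have e3' : finrank 𝕜 (ker g) = finrank 𝕜 (range f) := by rw [← hgf]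
  have e4 : finrank 𝕜 (range g) ≤ finrank 𝕜 C := Submodule.finrank_le _
  have e5 : finrank 𝕜 (range d) + finrank 𝕜 (ker d) = finrank 𝕜 C :=
    d.finrank_range_add_finrank_ker
  have e5' : finrank 𝕜 (ker d) = finrank 𝕜 (range u) := by rw [hud]
  have e6 : finrank 𝕜 (range u) ≤ finrank 𝕜 G := u.finrank_range_le
  have e7 : finrank 𝕜 (range d) ≤ finrank 𝕜 D := Submodule.finrank_le _
  omega

end LinAlg

/-- the abstract form of the paper's Theorem 1. Suppose
`0 → K → A →^β B → 0` is short exact; there are an object `H` and a morphism `γ : A ⟶ H`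
with `0 → A →^{(β,γ)} B ⊞ H → C → 0` short exact (the `B`-component of the first map
being `β`); and `0 → C' → G → C → 0` is short exact. Then
`cc(F, K) ≤ cc(F, G) + cc(F, A) + cc(F, C')`. -/
theorem cc_theorem_one (𝕜 : Type*) [Field 𝕜] {𝒜 : Type*} [Category 𝒜]
    [Abelian 𝒜] [Linear 𝕜 𝒜] [EnoughProjectives 𝒜] (F K A B C C' G H : 𝒜)
    (ι : K ⟶ A) (β : A ⟶ B) (w₁ : ι ≫ β = 0)
    (hse₁ : (ShortComplex.mk ι β w₁).ShortExact)
    (γ : A ⟶ H) (δ : B ⊞ H ⟶ C) (w₂ : biprod.lift β γ ≫ δ = 0)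
    (hse₂ : (ShortComplex.mk (biprod.lift β γ) δ w₂).ShortExact)
    (ι' : C' ⟶ G) (π : G ⟶ C) (w₃ : ι' ≫ π = 0)
    (hse₃ : (ShortComplex.mk ι' π w₃).ShortExact)
    (hfd : ∀ (i : ℕ) (X : 𝒜), FiniteDimensional 𝕜 (((Ext 𝕜 𝒜 i).obj (op F)).obj X))
    (hvan : ∀ X : 𝒜, ∃ N : ℕ, ∀ i ≥ N, Subsingleton (((Ext 𝕜 𝒜 i).obj (op F)).obj X)) :
    cc 𝕜 F K ≤ cc 𝕜 F G + cc 𝕜 F A + cc 𝕜 F C' := by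
  classical
  obtain ⟨P⟩ := HasProjectiveResolution.out (Z := F)
  have hP : ∀ n, Projective (P.complex.X n) := fun n => inferInstance
  -- homology dimensions
  haveI hfdh : ∀ (X : 𝒜) (i : ℕ),
      FiniteDimensional 𝕜 ((P.complex.linearYonedaObj 𝕜 X).homology i) := fun X i => by
    haveI := hfd i X
    exact (P.isoExt i X).toLinearEquiv.finiteDimensional
  have hdim : ∀ (X : 𝒜) (i : ℕ),
      Module.finrank 𝕜 (((Ext 𝕜 𝒜 i).obj (op F)).obj X)
        = Module.finrank 𝕜 ((P.complex.linearYonedaObj 𝕜 X).homology i) :=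
    fun X i => (P.isoExt i X).toLinearEquiv.finrank_eq
  set h : 𝒜 → ℕ → ℕ := fun X i =>
    Module.finrank 𝕜 ((P.complex.linearYonedaObj 𝕜 X).homology i) with hh
  -- short exact sequences of complexes
  have hS₁ := LS_shortExact (𝕜 := 𝕜) P.complex hP _ hse₁
  have hS₂ := LS_shortExact (𝕜 := 𝕜) P.complex hP _ hse₂
  have hS₃ := LS_shortExact (𝕜 := 𝕜) P.complex hP _ hse₃
  -- the key inequality in positive degrees
  have key : ∀ j : ℕ, h K (j+1) ≤ h A (j+1) + (h G j + h C' (j+1)) := by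
    intro j
    have hrel : (ComplexShape.up ℕ).Rel j (j+1) := by simp
    -- long exact sequence of the first short exact sequence
    have r₁ : LinearMap.range (HomologicalComplex.homologyMap (Lmap (𝕜 := 𝕜) P.complex β) j).hom
        = LinearMap.ker (hS₁.δ j (j+1) hrel).hom :=
      (hS₁.homology_exact₃ j (j+1) hrel).moduleCat_range_eq_ker
    have r₂ : LinearMap.range (hS₁.δ j (j+1) hrel).hom
        = LinearMap.ker (HomologicalComplex.homologyMap (Lmap (𝕜 := 𝕜) P.complex ι) (j+1)).hom :=
      (hS₁.homology_exact₁ j (j+1) hrel).moduleCat_range_eq_ker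
    have I1 :
        h K (j+1) + Module.finrank 𝕜 (LinearMap.range
            (HomologicalComplex.homologyMap (Lmap (𝕜 := 𝕜) P.complex β) j).hom)
          ≤ h A (j+1) + h B j :=
      les_count (𝕜 := 𝕜) _ _ _ r₁ r₂
    -- middle exactness of second sequence and third sequence
    have r₃ : LinearMap.range
          (HomologicalComplex.homologyMap (Lmap (𝕜 := 𝕜) P.complex (biprod.lift β γ)) j).hom
        = LinearMap.ker (HomologicalComplex.homologyMap (Lmap (𝕜 := 𝕜) P.complex δ) j).hom :=
      (hS₂.homology_exact₂ j).moduleCat_range_eq_ker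
    have r₄ : LinearMap.range (HomologicalComplex.homologyMap (Lmap (𝕜 := 𝕜) P.complex π) j).hom
        = LinearMap.ker (hS₃.δ j (j+1) hrel).hom :=
      (hS₃.homology_exact₃ j (j+1) hrel).moduleCat_range_eq_ker
    -- the projection on homology is surjective
    set p := HomologicalComplex.homologyMap
      (Lmap (𝕜 := 𝕜) P.complex (biprod.fst : B ⊞ H ⟶ B)) j with hp
    have hsec : HomologicalComplex.homologyMap
        (Lmap (𝕜 := 𝕜) P.complex (biprod.inl : B ⟶ B ⊞ H)) j ≫ p = 𝟙 _ := by
      rw [hp, ← HomologicalComplex.homologyMap_comp, ← Lmap_comp, biprod.inl_fst, Lmap_id,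
        HomologicalComplex.homologyMap_id]
    have hsurj : Function.Surjective p := by
      intro y
      refine ⟨HomologicalComplex.homologyMap
        (Lmap (𝕜 := 𝕜) P.complex (biprod.inl : B ⟶ B ⊞ H)) j y, ?_⟩
      have := congrArg (fun f => ModuleCat.Hom.hom f y) hsec
      simpa using this
    -- identify the composite with the map induced by β
    have hpf : p.hom ∘ₗ (HomologicalComplex.homologyMap
        (Lmap (𝕜 := 𝕜) P.complex (biprod.lift β γ)) j).hom
          = (HomologicalComplex.homologyMap (Lmap (𝕜 := 𝕜) P.complex β) j).hom := by
      rw [hp, ← ModuleCat.hom_comp, ← HomologicalComplex.homologyMap_comp, ← Lmap_comp,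
        biprod.lift_fst]
    haveI : FiniteDimensional 𝕜
        ((LS (𝕜 := 𝕜) P.complex (ShortComplex.mk ι' π w₃)).X₁.homology (j+1)) := hfdh C' (j+1)
    have hfix : Module.finrank 𝕜
        ((LS (𝕜 := 𝕜) P.complex (ShortComplex.mk ι' π w₃)).X₁.homology (j+1)) = h C' (j+1) := rfl
    have I2 := coker_count (𝕜 := 𝕜) p.hom hsurj _ _ r₃ _ _ r₄
    rw [hpf] at I2
    have hfixG : Module.finrank 𝕜 ((P.complex.linearYonedaObj 𝕜 G).homology j) = h G j := rfl
    have hfixB : Module.finrank 𝕜 ((P.complex.linearYonedaObj 𝕜 B).homology j) = h B j := rfl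
    omega
  -- degree 0
  have key0 : h K 0 ≤ h A 0 := by
    have hmι : Mono ι := hse₁.mono_f
    haveI : Mono ((Lmap (𝕜 := 𝕜) P.complex ι).f 0) := by
      rw [ModuleCat.mono_iff_injective]
      intro (h₁ : P.complex.X 0 ⟶ K) (h₂ : P.complex.X 0 ⟶ K) (e : h₁ ≫ ι = h₂ ≫ ι)
      exact (cancel_mono ι).mp e
    have hm := HomologicalComplex.mono_homologyMap_of_mono_of_not_rel
      (Lmap (𝕜 := 𝕜) P.complex ι) 0 (fun i hi => by simp at hi)
    exact LinearMap.finrank_le_finrank_of_injective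
      ((ModuleCat.mono_iff_injective _).mp hm)
  -- vanishing bounds
  obtain ⟨N₁, hN₁⟩ := hvan K
  obtain ⟨N₂, hN₂⟩ := hvan A
  obtain ⟨N₃, hN₃⟩ := hvan G
  obtain ⟨N₄, hN₄⟩ := hvan C'
  set N := max (max N₁ N₂) (max N₃ N₄) with hN
  have ccEq : ∀ (X : 𝒜) (M : ℕ), (∀ i ≥ M, Subsingleton (((Ext 𝕜 𝒜 i).obj (op F)).obj X)) →
      M ≤ N + 1 → cc 𝕜 F X = ∑ i ∈ Finset.range (N+1), h X i := by
    intro X M hM hMN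
    rw [cc, finsum_eq_finset_sum_of_support_subset]
    · exact Finset.sum_congr rfl (fun i _ => hdim X i)
    · intro i hi
      simp only [Function.mem_support, ne_eq] at hi
      simp only [Finset.coe_range, Set.mem_Iio, Finset.mem_coe, Finset.mem_range]
      by_contra hcon
      push_neg at hcon
      haveI := hM i (le_trans hMN hcon)
      exact hi Module.finrank_zero_of_subsingleton
  have eK := ccEq K N₁ hN₁ (by omega)
  have eA := ccEq A N₂ hN₂ (by omega)
  have eG := ccEq G N₃ hN₃ (by omega)
  have eC' := ccEq C' N₄ hN₄ (by omega)
  rw [eK, eA, eG, eC']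
  have splitK := Finset.sum_range_succ' (h K) N
  have splitA := Finset.sum_range_succ' (h A) N
  have splitC' := Finset.sum_range_succ' (h C') N
  have boundG : ∑ j ∈ Finset.range N, h G j ≤ ∑ i ∈ Finset.range (N+1), h G i :=
    Finset.sum_le_sum_of_subset (Finset.range_subset_range.mpr (by omega))
  have sumKey : ∑ j ∈ Finset.range N, h K (j+1)
      ≤ ∑ j ∈ Finset.range N, (h A (j+1) + (h G j + h C' (j+1))) :=
    Finset.sum_le_sum (fun j _ => key j)
  have expand : ∑ j ∈ Finset.range N, (h A (j+1) + (h G j + h C' (j+1)))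
      = (∑ j ∈ Finset.range N, h A (j+1))
        + ((∑ j ∈ Finset.range N, h G j) + ∑ j ∈ Finset.range N, h C' (j+1)) := by
    rw [Finset.sum_add_distrib, Finset.sum_add_distrib]
  omega
end

section
/- Let S be a finite set, let M_S be the monotone S-cube, and fix a vertex P of M_S and a function A assigning a nonnegative real number to each path of M_S starting at P (there are only finitely many such paths, since along each arrow the number of true values strictly increases). Then the function h : 𝔹^S → ℝ defined by h(f) = ∑_{Q ∈ Z_f} ∑_{φ ∈ Hom_{Z_f}(P, Q)} A(φ) is a formal AND measure. -/
/-- The monotone `S`-cube `M_S`: the quiver on `𝔹^S = S → Bool` with exactly one arrow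
from `f` to `g` when `f ≤ g` and `f s ≠ g s` for exactly one `s ∈ S`. -/
instance monotoneCubeQuiver (S : Type*) : Quiver (S → Bool) :=
  ⟨fun f g => PLift (f ≤ g ∧ ∃! s : S, f s ≠ g s)⟩

/-- `MemHomZ Z p` says that all vertices of the path `p` except the last one lie
outside `Z`; i.e. `p ∈ Hom_Z(P, Q)` in the notation of the paper. -/
def MemHomZ {V : Type*} [Quiver V] (Z : Set V) : ∀ {a c : V}, Quiver.Path a c → Prop
  | _, _, Quiver.Path.nil => True
  | _, _, Quiver.Path.cons (b := b) p _ => MemHomZ Z p ∧ b ∉ Z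

/-- The paper's measure `h(f) = ∑_{Q ∈ Z_f} ∑_{φ ∈ Hom_{Z_f}(P, Q)} A(φ)`, where
`Z_f = 𝔹^S \ U_f = {g : ¬ g ≤ f}` (the sums are finite, as each arrow of `M_S`
strictly increases the number of `true` values). -/
noncomputable def pathMeasure {S : Type*} [Fintype S] (P : S → Bool)
    (A : ∀ Q : S → Bool, Quiver.Path P Q → ℝ) (f : S → Bool) : ℝ :=
  ∑ᶠ (Q : S → Bool) (_ : Q ∈ {g : S → Bool | ¬ g ≤ f}),
    ∑ᶠ (φ : Quiver.Path P Q) (_ : MemHomZ {g : S → Bool | ¬ g ≤ f} φ), A Q φ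

namespace PathMeasureAux

@[simp] theorem memHomZ_nil {V : Type*} [Quiver V] (Z : Set V) (a : V) :
    MemHomZ Z (Quiver.Path.nil : Quiver.Path a a) := by
  simp [MemHomZ]

@[simp] theorem memHomZ_cons {V : Type*} [Quiver V] (Z : Set V) {a b c : V}
    (p : Quiver.Path a b) (e : b ⟶ c) :
    MemHomZ Z (p.cons e) ↔ MemHomZ Z p ∧ b ∉ Z := by
  simp [MemHomZ]

/-- Monotonicity of `MemHomZ` in the forbidden set. -/
theorem memHomZ_mono {V : Type*} [Quiver V] {Z Z' : Set V} (h : Z' ⊆ Z)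
    {a c : V} (p : Quiver.Path a c) (hp : MemHomZ Z p) : MemHomZ Z' p := by
  induction p with
  | nil => simp
  | cons p e ih =>
    rw [memHomZ_cons] at hp ⊢
    exact ⟨ih hp.1, fun hz => hp.2 (h hz)⟩

/-- The list of intermediate vertices of a path (excluding the start). -/
def vlist {V : Type*} [Quiver V] : ∀ {a b : V}, Quiver.Path a b → List V
  | _, _, Quiver.Path.nil => []
  | _, _, Quiver.Path.cons (b := c) p _ => c :: vlist p

theorem vlist_length {V : Type*} [Quiver V] {a b : V} (p : Quiver.Path a b) :
    (vlist p).length = p.length := by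
  induction p with
  | nil => simp [vlist]
  | cons p e ih => simp [vlist, ih]

theorem vlist_injective {V : Type*} [Quiver V] [∀ a b : V, Subsingleton (a ⟶ b)]
    {a b : V} (p q : Quiver.Path a b) (h : vlist p = vlist q) : p = q := by
  induction p with
  | nil =>
    cases q with
    | nil => rfl
    | cons q e => simp [vlist] at h
  | cons p e ih =>
    cases q with
    | nil => simp [vlist] at h
    | cons q e' =>
      simp only [vlist, List.cons.injEq] at h
      obtain ⟨rfl, h2⟩ := h
      rw [ih q h2]
      congr 1
      exact Subsingleton.elim _ _

instance {S : Type*} (a b : S → Bool) : Subsingleton (a ⟶ b) :=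
  ⟨fun x y => by change PLift _ at x y; cases x; cases y; rfl⟩

/-- The number of `true` values of `f`. -/
def nTrue {S : Type*} [Fintype S] [DecidableEq S] (f : S → Bool) : ℕ :=
  (Finset.univ.filter fun s => f s = true).card

theorem nTrue_lt {S : Type*} [Fintype S] [DecidableEq S] {a b : S → Bool} (e : a ⟶ b) :
    nTrue a < nTrue b := by
  obtain ⟨hle, s, hs, -⟩ := e.down
  apply Finset.card_lt_card
  constructor
  · intro x hx
    simp only [nTrue, Finset.mem_filter, Finset.mem_univ, true_and] at *
    have hx2 := hle x
    rw [hx] at hx2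
    exact Bool.eq_true_of_true_le hx2
  · intro hsub
    have hles := hle s
    have hb : b s = true := by
      revert hs hles; cases a s <;> cases b s <;> simp
    have ha : a s = true := by
      have := hsub (Finset.mem_filter.mpr ⟨Finset.mem_univ s, hb⟩)
      simpa using this
    rw [ha, hb] at hs
    exact hs rfl

theorem length_le_nTrue {S : Type*} [Fintype S] [DecidableEq S]
    {a b : S → Bool} (p : Quiver.Path a b) : p.length + nTrue a ≤ nTrue b := by
  induction p with
  | nil => simp
  | cons p e ih =>
    have h2 := nTrue_lt e
    simp only [Quiver.Path.length_cons]
    omega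

instance pathFinite {S : Type*} [Fintype S] (a b : S → Bool) :
    Finite (Quiver.Path a b) := by
  classical
  have hfin : {l : List (S → Bool) | l.length ≤ Fintype.card S}.Finite :=
    List.finite_length_le _ _
  have : Finite {l : List (S → Bool) | l.length ≤ Fintype.card S} := hfin.to_subtype
  refine Finite.of_injective
    (fun p : Quiver.Path a b =>
      (⟨vlist p, ?_⟩ : {l : List (S → Bool) | l.length ≤ Fintype.card S})) ?_
  · have h1 := length_le_nTrue p
    have h2 : nTrue b ≤ Fintype.card S := by
      simpa [nTrue] using Finset.card_filter_le Finset.univ (fun s => b s = true)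
    have h3 := vlist_length p
    simp only [Set.mem_setOf_eq]
    omega
  · intro p q h
    exact vlist_injective p q (by simpa using h)

theorem pathMeasure_eq_sum {S : Type*} [Fintype S] [DecidableEq S] (P : S → Bool)
    [I : ∀ Q : S → Bool, Fintype (Quiver.Path P Q)]
    (A : ∀ Q : S → Bool, Quiver.Path P Q → ℝ) (f : S → Bool) :
    pathMeasure P A f =
      ∑ Q : S → Bool, Set.indicator {g : S → Bool | ¬ g ≤ f}
        (fun Q => ∑ φ : Quiver.Path P Q,
          Set.indicator {φ : Quiver.Path P Q | MemHomZ {g : S → Bool | ¬ g ≤ f} φ}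
            (A Q) φ) Q := by
  rw [pathMeasure]
  have hinner : ∀ Q : S → Bool,
      (∑ᶠ (φ : Quiver.Path P Q) (_ : MemHomZ {g : S → Bool | ¬ g ≤ f} φ), A Q φ)
        = ∑ φ : Quiver.Path P Q,
            Set.indicator {φ : Quiver.Path P Q | MemHomZ {g : S → Bool | ¬ g ≤ f} φ}
              (A Q) φ := by
    intro Q
    rw [← finsum_eq_sum_of_fintype, ← finsum_mem_def]
    rfl
  simp_rw [hinner]
  rw [finsum_mem_def, finsum_eq_sum_of_fintype]

end PathMeasureAux

open PathMeasureAux in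
/-- For any vertex `P` of the monotone `S`-cube and any assignment `A` of
nonnegative reals to the paths of `M_S` starting at `P`, the function
`h(f) = ∑_{Q ∈ Z_f} ∑_{φ ∈ Hom_{Z_f}(P, Q)} A(φ)` is a formal AND measure. -/
theorem pathMeasure_is_formal_and_measure {S : Type*} [Fintype S] (P : S → Bool)
    (A : ∀ Q : S → Bool, Quiver.Path P Q → ℝ)
    (hA : ∀ (Q : S → Bool) (φ : Quiver.Path P Q), 0 ≤ A Q φ) :
    (∀ f : S → Bool, 0 ≤ pathMeasure P A f) ∧
    (∀ f g : S → Bool, pathMeasure P A (f ⊓ g) ≤ pathMeasure P A f + pathMeasure P A g) := by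
  classical
  letI I : ∀ Q : S → Bool, Fintype (Quiver.Path P Q) := fun Q => Fintype.ofFinite _
  -- nonnegativity of each inner indicator sum
  have hinner_nonneg : ∀ (f : S → Bool) (Q : S → Bool),
      0 ≤ ∑ φ : Quiver.Path P Q,
        Set.indicator {φ : Quiver.Path P Q | MemHomZ {g : S → Bool | ¬ g ≤ f} φ}
          (A Q) φ := fun f Q =>
    Finset.sum_nonneg fun φ _ => Set.indicator_nonneg (fun ψ _ => hA Q ψ) φ
  have houter_nonneg : ∀ (f Q : S → Bool),
      0 ≤ Set.indicator {g : S → Bool | ¬ g ≤ f}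
        (fun Q => ∑ φ : Quiver.Path P Q,
          Set.indicator {φ : Quiver.Path P Q | MemHomZ {g : S → Bool | ¬ g ≤ f} φ}
            (A Q) φ) Q := fun f Q =>
    Set.indicator_nonneg (fun Q' _ => hinner_nonneg f Q') Q
  constructor
  · intro f
    rw [pathMeasure_eq_sum]
    exact Finset.sum_nonneg fun Q _ => houter_nonneg f Q
  · intro f g
    rw [pathMeasure_eq_sum, pathMeasure_eq_sum, pathMeasure_eq_sum,
      ← Finset.sum_add_distrib]
    apply Finset.sum_le_sum
    intro Q _
    by_cases hQ : Q ∈ {g' : S → Bool | ¬ g' ≤ f ⊓ g}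
    · rw [Set.indicator_of_mem hQ]
      -- Q is not below f ⊓ g, hence not below f or not below g
      have hor : Q ∈ {g' : S → Bool | ¬ g' ≤ f} ∨ Q ∈ {g' : S → Bool | ¬ g' ≤ g} := by
        by_contra hcon
        push_neg at hcon
        simp only [Set.mem_setOf_eq, not_not] at hcon
        exact hQ (le_inf hcon.1 hcon.2)
      -- helper: the inner sum for f ⊓ g is at most the inner sum for h when Z_h ⊆ Z_{f⊓g}
      have key : ∀ h : S → Bool, {g' : S → Bool | ¬ g' ≤ h} ⊆ {g' : S → Bool | ¬ g' ≤ f ⊓ g} →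
          (∑ φ : Quiver.Path P Q,
            Set.indicator {φ : Quiver.Path P Q | MemHomZ {g' : S → Bool | ¬ g' ≤ f ⊓ g} φ}
              (A Q) φ) ≤
          ∑ φ : Quiver.Path P Q,
            Set.indicator {φ : Quiver.Path P Q | MemHomZ {g' : S → Bool | ¬ g' ≤ h} φ}
              (A Q) φ := by
        intro h hsub
        apply Finset.sum_le_sum
        intro φ _
        by_cases hφ : φ ∈ {φ : Quiver.Path P Q | MemHomZ {g' : S → Bool | ¬ g' ≤ f ⊓ g} φ}
        · have hφ' : φ ∈ {φ : Quiver.Path P Q | MemHomZ {g' : S → Bool | ¬ g' ≤ h} φ} :=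
            memHomZ_mono hsub φ hφ
          rw [Set.indicator_of_mem hφ, Set.indicator_of_mem hφ']
        · rw [Set.indicator_of_notMem hφ]
          exact Set.indicator_nonneg (fun ψ _ => hA Q ψ) φ
      rcases hor with hf | hg
      · rw [Set.indicator_of_mem hf]
        have hsub : {g' : S → Bool | ¬ g' ≤ f} ⊆ {g' : S → Bool | ¬ g' ≤ f ⊓ g} :=
          fun x hx hle => hx (hle.trans inf_le_left)
        calc (∑ φ : Quiver.Path P Q,
              Set.indicator {φ : Quiver.Path P Q | MemHomZ {g' : S → Bool | ¬ g' ≤ f ⊓ g} φ}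
                (A Q) φ)
            ≤ ∑ φ : Quiver.Path P Q,
              Set.indicator {φ : Quiver.Path P Q | MemHomZ {g' : S → Bool | ¬ g' ≤ f} φ}
                (A Q) φ := key f hsub
          _ ≤ _ := le_add_of_nonneg_right (houter_nonneg g Q)
      · rw [Set.indicator_of_mem hg]
        have hsub : {g' : S → Bool | ¬ g' ≤ g} ⊆ {g' : S → Bool | ¬ g' ≤ f ⊓ g} :=
          fun x hx hle => hx (hle.trans inf_le_right)
        calc (∑ φ : Quiver.Path P Q,
              Set.indicator {φ : Quiver.Path P Q | MemHomZ {g' : S → Bool | ¬ g' ≤ f ⊓ g} φ}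
                (A Q) φ)
            ≤ ∑ φ : Quiver.Path P Q,
              Set.indicator {φ : Quiver.Path P Q | MemHomZ {g' : S → Bool | ¬ g' ≤ g} φ}
                (A Q) φ := key g hsub
          _ ≤ _ := le_add_of_nonneg_left (houter_nonneg f Q)
    · rw [Set.indicator_of_notMem hQ]
      exact add_nonneg (houter_nonneg f Q) (houter_nonneg g Q)
end
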